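/- Let r₀ : ℝ → ℝ be C¹, bounded, with bounded derivative, such that r₀(+∞) := lim_{x→+∞} r₀(x) exists and is finite, and let α ∈ ℝ and ε > 0 satisfy: r₀'(α)·( r₀(α) + r₀(+∞) ) < 0, r₀'(α)·r₀(α) < 0, and |r₀(α) + r₀(x)| > ε for every x ≥ α. Set γ₂⁺(α) := min{ |f(η)| : η ∈ [ε, sup_{x ≥ α} |r₀(α) + r₀(x)|] } and t_c := 1 / ( √(k(2r₀(α)))·|r₀'(α)|·γ₂⁺(α) ). Then any C¹ solution of the diagonal system ∂ₜr + k(r−ℓ)·∂ₓr = 0, ∂ₜℓ − k(r−ℓ)·∂ₓℓ = 0 with data r(0,·) = r₀, ℓ(0,·) = −r₀ on a strip [0,T)×ℝ, admitting C¹ forward and backward characteristic families (with continuous mixed second partials) and a C¹ intersection function β with x₁(t,α') = x₂(t, β(t,α')), must have T ≤ t_c; that is, the critical breakdown time t*(α) satisfies t*(α) ≤ 1/( √(k(2r₀(α)))·|r₀'(α)|·γ₂⁺(α) ). -/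

import Mathlib

open Filter

/-- The primitive `L` of the wave velocity `Q(ξ) = √(1+ξ²)` with `L 0 = 0`. -/
noncomputable def L (u : ℝ) : ℝ := (u * Real.sqrt (1 + u ^ 2) + Real.arsinh u) / 2

/-- The function `f(η) := k'(η)/√(k(η))`. -/
noncomputable def fk (k : ℝ → ℝ) (η : ℝ) : ℝ := deriv k η / Real.sqrt (k η)

open Set

open Filter


lemma sq1_pos (u : ℝ) : (0:ℝ) < 1 + u ^ 2 := by positivity
lemma sqrt1_pos (u : ℝ) : (0:ℝ) < Real.sqrt (1 + u ^ 2) := Real.sqrt_pos.mpr (sq1_pos u)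
lemma sqrt1_ge_one (u : ℝ) : (1:ℝ) ≤ Real.sqrt (1 + u ^ 2) :=
  Real.one_le_sqrt.mpr (by nlinarith)

lemma hasDerivAt_sqrt1 (u : ℝ) :
    HasDerivAt (fun v : ℝ => Real.sqrt (1 + v ^ 2)) (u / Real.sqrt (1 + u ^ 2)) u := by
  have h1 : HasDerivAt (fun v : ℝ => 1 + v ^ 2) (2 * u) u := by
    simpa using ((hasDerivAt_pow 2 u).const_add 1)
  have := h1.sqrt (ne_of_gt (sq1_pos u))
  convert this using 1
  field_simp

lemma hasDerivAt_L (u : ℝ) : HasDerivAt L (Real.sqrt (1 + u ^ 2)) u := by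
  have h1 : HasDerivAt (fun v : ℝ => v * Real.sqrt (1 + v ^ 2))
      (Real.sqrt (1 + u ^ 2) + u * (u / Real.sqrt (1 + u ^ 2))) u := by
    exact ((hasDerivAt_id' u).mul (hasDerivAt_sqrt1 u)).congr_deriv (by ring)
  have h2 := (h1.add (Real.hasDerivAt_arsinh u)).div_const 2
  refine h2.congr_deriv ?_
  have hs := sqrt1_pos u
  have hsq : Real.sqrt (1 + u ^ 2) ^ 2 = 1 + u ^ 2 := Real.sq_sqrt (le_of_lt (sq1_pos u))
  field_simp
  nlinarith [hsq]

lemma L_strictMono : StrictMono L :=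
  strictMono_of_deriv_pos (fun u => by rw [(hasDerivAt_L u).deriv]; exact sqrt1_pos u)

lemma L_zero : L 0 = 0 := by simp [L]

lemma L_neg (u : ℝ) : L (-u) = - L u := by
  unfold L; rw [Real.arsinh_neg]; ring_nf

lemma L_surj_aux : Tendsto L atTop atTop := by
  apply tendsto_atTop_mono' _ _ (tendsto_id.atTop_div_const (show (0:ℝ) < 2 by norm_num))
  filter_upwards [eventually_ge_atTop (0:ℝ)] with u hu
  unfold L
  have h1 : u ≤ u * Real.sqrt (1 + u ^ 2) := by nlinarith [sqrt1_ge_one u]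
  have h2 : (0:ℝ) ≤ Real.arsinh u := Real.arsinh_nonneg_iff.mpr hu
  simp only [id]
  linarith

lemma L_surj : Function.Surjective L := by
  have hd : Differentiable ℝ L := fun u => (hasDerivAt_L u).differentiableAt
  apply Continuous.surjective hd.continuous L_surj_aux
  have : Tendsto (fun u => - L (-u)) atBot atBot :=
    tendsto_neg_atTop_atBot.comp (L_surj_aux.comp tendsto_neg_atBot_atTop)
  simpa [L_neg] using this

section kfacts
variable (k : ℝ → ℝ) (hk : ∀ u : ℝ, k (-(2 * L u)) = Real.sqrt (1 + u ^ 2))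
  (hk1 : ContDiff ℝ 1 k)

include hk in
lemma k_repr (η : ℝ) : ∃ u : ℝ, -(2 * L u) = η ∧ k η = Real.sqrt (1 + u ^ 2) := by
  obtain ⟨u, hu⟩ := L_surj (-η / 2)
  refine ⟨u, by rw [hu]; ring, ?_⟩
  rw [← hk u, hu]; norm_num; ring_nf

include hk in
lemma k_ge_one (η : ℝ) : 1 ≤ k η := by
  obtain ⟨u, _, h2⟩ := k_repr k hk η
  rw [h2]; exact sqrt1_ge_one u

include hk hk1 in
lemma k_deriv_eq (u : ℝ) : deriv k (-(2 * L u)) = -u / (2 * (1 + u ^ 2)) := by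
  have hdk : HasDerivAt k (deriv k (-(2 * L u))) (-(2 * L u)) :=
    (hk1.differentiable one_ne_zero _).hasDerivAt
  have hin : HasDerivAt (fun v : ℝ => -(2 * L v)) (-(2 * Real.sqrt (1 + u ^ 2))) u := by
    exact ((hasDerivAt_L u).const_mul 2).neg
  have hcomp := hdk.comp u hin
  have heq : (fun v : ℝ => k (-(2 * L v))) = fun v : ℝ => Real.sqrt (1 + v ^ 2) :=
    funext fun v => hk v
  rw [show (k ∘ fun v : ℝ => -(2 * L v)) = fun v : ℝ => Real.sqrt (1 + v ^ 2) from funext fun v => hk v] at hcomp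
  have := (hasDerivAt_sqrt1 u).unique hcomp
  have hs := sqrt1_pos u
  have hsq : Real.sqrt (1 + u ^ 2) ^ 2 = 1 + u ^ 2 := Real.sq_sqrt (le_of_lt (sq1_pos u))
  set D := deriv k (-(2 * L u)) with hD
  have h4 : D * (2 * (1 + u ^ 2)) = -u := by
    have h5 : u = -(D * (2 * Real.sqrt (1 + u ^ 2)) * Real.sqrt (1 + u ^ 2)) := by
      field_simp at this
      linarith [this]
    linear_combination h5 - 2 * D * hsq
  have h6 : (0:ℝ) < 2 * (1 + u ^ 2) := by positivity
  field_simp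
  linarith [h4]

include hk hk1 in
lemma k_deriv_pos {η : ℝ} (hη : 0 < η) : 0 < deriv k η := by
  obtain ⟨u, h1, _⟩ := k_repr k hk η
  have hu : u < 0 := by
    by_contra h
    push_neg at h
    have : L 0 ≤ L u := L_strictMono.monotone h
    rw [L_zero] at this
    nlinarith [h1]
  rw [← h1, k_deriv_eq k hk hk1]
  have h2 := sq1_pos u
  have h3 : (0:ℝ) < -u := by linarith
  have : (0:ℝ) < 2 * (1 + u ^ 2) := by positivity
  exact div_pos h3 this

include hk hk1 in
lemma k_deriv_neg {η : ℝ} (hη : η < 0) : deriv k η < 0 := by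
  obtain ⟨u, h1, _⟩ := k_repr k hk η
  have hu : 0 < u := by
    by_contra h
    push_neg at h
    have : L u ≤ L 0 := L_strictMono.monotone h
    rw [L_zero] at this
    nlinarith [h1]
  rw [← h1, k_deriv_eq k hk hk1]
  have h2 := sq1_pos u
  have : (0:ℝ) < 2 * (1 + u ^ 2) := by positivity
  exact div_neg_of_neg_of_pos (by linarith) this

include hk in
lemma k_pos (η : ℝ) : 0 < k η := lt_of_lt_of_le one_pos (k_ge_one k hk η)

include hk in
lemma sqrt_k_pos (η : ℝ) : 0 < Real.sqrt (k η) := Real.sqrt_pos.mpr (k_pos k hk η)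

include hk hk1 in
lemma fk_cont : Continuous (fun η => |fk k η|) := by
  have h1 : Continuous (deriv k) := hk1.continuous_deriv le_rfl
  have h2 : Continuous fun η => Real.sqrt (k η) :=
    Real.continuous_sqrt.comp (hk1.continuous)
  exact ((h1.div h2 fun η => ne_of_gt (sqrt_k_pos k hk η))).abs

include hk in
lemma k_even (η : ℝ) : k (-η) = k η := by
  obtain ⟨u, hu, h2⟩ := k_repr k hk η
  have h3 := hk (-u)
  rw [L_neg] at h3
  rw [h2, ← hu]
  simpa using h3

include hk hk1 in
lemma k_deriv_odd (η : ℝ) : deriv k (-η) = - deriv k η := by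
  have h1 : HasDerivAt (fun x : ℝ => k (-x)) (deriv k (-η) * (-1)) η :=
    ((hk1.differentiable one_ne_zero _).hasDerivAt).comp η (by exact (hasDerivAt_id' η).neg)
  have h2 : (fun x : ℝ => k (-x)) = k := funext (k_even k hk)
  rw [h2] at h1
  have h3 := h1.unique ((hk1.differentiable one_ne_zero η).hasDerivAt)
  linarith

include hk hk1 in
lemma fk_abs_even (η : ℝ) : |fk k (-η)| = |fk k η| := by
  unfold fk
  rw [k_deriv_odd k hk hk1, k_even k hk, abs_div, abs_div, abs_neg]

end kfacts

lemma mono_of_deriv {f : ℝ → ℝ} {a b : ℝ} (hab : a ≤ b)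
    (hc : ContinuousOn f (Set.Icc a b))
    (hd : ∀ t ∈ Set.Ioo a b, ∃ d, HasDerivAt f d t ∧ 0 ≤ d) :
    f a ≤ f b := by
  rcases eq_or_lt_of_le hab with h | h
  · rw [h]
  · have := monotoneOn_of_deriv_nonneg (convex_Icc a b) hc
      (fun t ht => by
        rw [interior_Icc] at ht
        obtain ⟨d, hd', _⟩ := hd t ht
        exact hd'.differentiableAt.differentiableWithinAt)
      (fun t ht => by
        rw [interior_Icc] at ht
        obtain ⟨d, hd', hd0⟩ := hd t ht
        rw [hd'.deriv]; exact hd0)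
    exact this (Set.left_mem_Icc.mpr hab) (Set.right_mem_Icc.mpr hab) hab

lemma le_linear_of_deriv_le {f : ℝ → ℝ} {a b m : ℝ} (hab : a ≤ b)
    (hc : ContinuousOn f (Set.Icc a b))
    (hd : ∀ t ∈ Set.Ioo a b, ∃ d, HasDerivAt f d t ∧ d ≤ m) :
    f b ≤ f a + m * (b - a) := by
  have h := mono_of_deriv (f := fun t => m * t - f t) hab
    ((continuous_const.mul continuous_id).continuousOn.sub hc)
    (fun t ht => by
      obtain ⟨d, hd', hdm⟩ := hd t ht
      exact ⟨m - d, by exact (((hasDerivAt_id' t).const_mul m).sub hd').congr_deriv (by ring), by linarith⟩)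
  linarith

lemma const_of_deriv_zero {f : ℝ → ℝ} {a b : ℝ} (hab : a ≤ b)
    (hc : ContinuousOn f (Set.Icc a b))
    (hd : ∀ t ∈ Set.Ioo a b, HasDerivAt f 0 t) : f b = f a := by
  have h1 := le_linear_of_deriv_le hab hc (fun t ht => ⟨0, hd t ht, le_rfl⟩)
  have h2 := le_linear_of_deriv_le (f := fun t => -f t) hab hc.neg
    (fun t ht => ⟨0, (hd t ht).neg.congr_deriv (by norm_num), le_rfl⟩)
  simp only [zero_mul] at h1 h2
  linarith

/-- Partial derivatives and chain rule from joint `ContDiffOn` at a point where the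
set is a neighborhood. -/
lemma partials {F : ℝ × ℝ → ℝ} {U : Set (ℝ × ℝ)} (hF : ContDiffOn ℝ 1 F U)
    {t x : ℝ} (hp : U ∈ nhds ((t, x) : ℝ × ℝ)) :
    ∃ Dt Dx : ℝ, HasDerivAt (fun s => F (s, x)) Dt t ∧
      HasDerivAt (fun y => F (t, y)) Dx x ∧
      ∀ (V : ℝ → ℝ) (v : ℝ), HasDerivAt V v t → V t = x →
        HasDerivAt (fun s => F (s, V s)) (Dt + v * Dx) t := by
  have hdF : DifferentiableAt ℝ F (t, x) :=
    (hF.contDiffAt hp).differentiableAt one_ne_zero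
  set D := fderiv ℝ F (t, x) with hD
  have hFD : HasFDerivAt F D (t, x) := hdF.hasFDerivAt
  refine ⟨D (1, 0), D (0, 1), ?_, ?_, ?_⟩
  · have hc : HasDerivAt (fun s : ℝ => (s, x)) ((1 : ℝ), (0 : ℝ)) t :=
      (hasDerivAt_id t).prodMk (hasDerivAt_const t x)
    exact hFD.comp_hasDerivAt t hc
  · have hc : HasDerivAt (fun y : ℝ => (t, y)) ((0 : ℝ), (1 : ℝ)) x :=
      (hasDerivAt_const x t).prodMk (hasDerivAt_id x)
    exact hFD.comp_hasDerivAt x hc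
  · intro V v hV hVp
    subst hVp
    have hc : HasDerivAt (fun s : ℝ => (s, V s)) ((1 : ℝ), v) t :=
      (hasDerivAt_id t).prodMk hV
    have := hFD.comp_hasDerivAt t hc
    have hval : D (1, v) = D (1, 0) + v * D (0, 1) := by
      have h2 : ((1 : ℝ), v) = (1, 0) + v • ((0 : ℝ), (1 : ℝ)) := by simp
      rw [h2, map_add, map_smul]; simp [smul_eq_mul]
    rw [hval] at this; exact this

lemma ereal_dense' {T : EReal} {c : ℝ} (h : (c : EReal) < T) :
    ∃ d : ℝ, c < d ∧ (d : EReal) < T := by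
  induction T using EReal.rec with
  | bot => exact absurd h (by simp)
  | coe x =>
    have hcx : c < x := by exact_mod_cast h
    exact ⟨(c + x) / 2, by linarith, by exact_mod_cast (by linarith : (c + x) / 2 < x)⟩
  | top => exact ⟨c + 1, by linarith, by exact_mod_cast EReal.coe_lt_top _⟩

set_option maxHeartbeats 1000000 in
/-- second critical-time estimate: if `r₀'(α)(r₀(α)+r₀(+∞)) < 0`,
`r₀'(α)·r₀(α) < 0`, and `|r₀(α)+r₀(x)| > ε` for all `x ≥ α`, then any C¹ solution of the
diagonal system on `[0,T)×ℝ` (with C¹ characteristic families and intersection function)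
has `T ≤ 1/(√(k(2r₀(α)))·|r₀'(α)|·γ₂⁺(α))` with
`γ₂⁺(α) = min {|f(η)| : η ∈ [ε, sup_{x ≥ α} |r₀(α)+r₀(x)|]}`. -/
theorem critical_time_estimate_second
    (k : ℝ → ℝ) (hk : ∀ u : ℝ, k (-(2 * L u)) = Real.sqrt (1 + u ^ 2))
    (hk1 : ContDiff ℝ 1 k)
    (r₀ : ℝ → ℝ) (hr₀ : ContDiff ℝ 1 r₀)
    (hr₀b : ∃ C : ℝ, ∀ x, |r₀ x| ≤ C) (hr₀'b : ∃ C : ℝ, ∀ x, |deriv r₀ x| ≤ C)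
    (rp : ℝ) (hrp : Tendsto r₀ atTop (nhds rp))
    (α : ℝ) (ε : ℝ) (hε : 0 < ε) (hα : deriv r₀ α * (r₀ α + rp) < 0)
    (hαsign : deriv r₀ α * r₀ α < 0)
    (hsep : ∀ x : ℝ, α ≤ x → ε < |r₀ α + r₀ x|)
    (T : EReal) (hT : 0 < T)
    (r l x₁ x₂ B : ℝ → ℝ → ℝ)
    (hrl : ContDiffOn ℝ 1 (fun p : ℝ × ℝ => (r p.1 p.2, l p.1 p.2))
      {p : ℝ × ℝ | 0 ≤ p.1 ∧ (p.1 : EReal) < T})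
    (hsys : ∀ t x : ℝ, 0 ≤ t → (t : EReal) < T →
      deriv (fun s => r s x) t + k (r t x - l t x) * deriv (fun y => r t y) x = 0 ∧
      deriv (fun s => l s x) t - k (r t x - l t x) * deriv (fun y => l t y) x = 0)
    (hir : ∀ x, r 0 x = r₀ x) (hil : ∀ x, l 0 x = -(r₀ x))
    (hx₁ode : ∀ (a t : ℝ), 0 ≤ t → (t : EReal) < T →
      HasDerivAt (fun s => x₁ s a) (k (r t (x₁ t a) - l t (x₁ t a))) t)
    (hx₁0 : ∀ a, x₁ 0 a = a)
    (hx₂ode : ∀ (b t : ℝ), 0 ≤ t → (t : EReal) < T →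
      HasDerivAt (fun s => x₂ s b) (-(k (r t (x₂ t b) - l t (x₂ t b)))) t)
    (hx₂0 : ∀ b, x₂ 0 b = b)
    (hx₁C : ContDiffOn ℝ 1 (fun p : ℝ × ℝ => x₁ p.1 p.2)
      {p : ℝ × ℝ | 0 ≤ p.1 ∧ (p.1 : EReal) < T})
    (hx₂C : ContDiffOn ℝ 1 (fun p : ℝ × ℝ => x₂ p.1 p.2)
      {p : ℝ × ℝ | 0 ≤ p.1 ∧ (p.1 : EReal) < T})
    (hx₁mix : ContinuousOn
      (fun p : ℝ × ℝ => deriv (fun s => deriv (fun a => x₁ s a) p.2) p.1)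
      {p : ℝ × ℝ | 0 ≤ p.1 ∧ (p.1 : EReal) < T})
    (hx₂mix : ContinuousOn
      (fun p : ℝ × ℝ => deriv (fun s => deriv (fun b => x₂ s b) p.2) p.1)
      {p : ℝ × ℝ | 0 ≤ p.1 ∧ (p.1 : EReal) < T})
    (hB : ContDiffOn ℝ 1 (fun p : ℝ × ℝ => B p.1 p.2)
      {p : ℝ × ℝ | 0 ≤ p.1 ∧ (p.1 : EReal) < T})
    (hBint : ∀ (t a : ℝ), 0 ≤ t → (t : EReal) < T → x₁ t a = x₂ t (B t a)) :
    T ≤ ((1 / (Real.sqrt (k (2 * r₀ α)) * |deriv r₀ α| *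
      sInf ((fun η => |fk k η|) ''
        Set.Icc ε (⨆ x ∈ Set.Ici α, |r₀ α + r₀ x|))) : ℝ) : EReal) := by
  classical
  have hd0 : deriv r₀ α ≠ 0 := by
    intro h; rw [h] at hαsign; simp at hαsign
  have hr0ne : r₀ α ≠ 0 := by
    intro h; rw [h] at hαsign; simp at hαsign
  have hR' : 0 < |deriv r₀ α| := abs_pos.mpr hd0
  obtain ⟨C, hC⟩ := hr₀b
  have hC0 : 0 ≤ C := le_trans (abs_nonneg _) (hC 0)
  set M := ⨆ x ∈ Set.Ici α, |r₀ α + r₀ x| with hM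
  have hM1 : ∀ x, α ≤ x → |r₀ α + r₀ x| ≤ M := by
    intro x hx
    have hbdd : BddAbove (Set.range fun x => ⨆ _ : x ∈ Set.Ici α, |r₀ α + r₀ x|) := by
      refine ⟨|r₀ α| + C, ?_⟩
      rintro _ ⟨z, rfl⟩
      refine Real.iSup_le (fun _ => ?_) (by positivity)
      calc |r₀ α + r₀ z| ≤ |r₀ α| + |r₀ z| := abs_add_le _ _
        _ ≤ |r₀ α| + C := by linarith [hC z]
    have h2 := le_ciSup hbdd x
    rwa [ciSup_pos (show x ∈ Set.Ici α from hx)] at h2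
  have hεM : ε ≤ M := le_trans (le_of_lt (hsep α le_rfl)) (hM1 α le_rfl)
  set γ := sInf ((fun η => |fk k η|) '' Set.Icc ε M) with hγdef
  have hSne : ((fun η => |fk k η|) '' Set.Icc ε M).Nonempty :=
    ⟨_, Set.mem_image_of_mem _ (Set.left_mem_Icc.mpr hεM)⟩
  have hScpt : IsCompact ((fun η => |fk k η|) '' Set.Icc ε M) :=
    (isCompact_Icc).image_of_continuousOn ((fk_cont k hk hk1).continuousOn)
  have hfkpos : ∀ η : ℝ, ε ≤ η → 0 < |fk k η| := by
    intro η hη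
    have h1 : 0 < deriv k η := k_deriv_pos k hk hk1 (lt_of_lt_of_le hε hη)
    have h2 := sqrt_k_pos k hk η
    exact abs_pos.mpr (ne_of_gt (div_pos h1 h2))
  have hγpos : 0 < γ := by
    obtain ⟨η₀, hη₀, hη₀eq⟩ := hScpt.sInf_mem hSne
    rw [hγdef, ← hη₀eq]
    exact hfkpos η₀ hη₀.1
  have hγle : ∀ η : ℝ, ε ≤ η → η ≤ M → γ ≤ |fk k η| := fun η h1 h2 =>
    csInf_le hScpt.bddBelow (Set.mem_image_of_mem _ ⟨h1, h2⟩)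
  set kα := Real.sqrt (k (2 * r₀ α)) with hkαdef
  have hkαpos : 0 < kα := sqrt_k_pos k hk _
  set tc := 1 / (kα * |deriv r₀ α| * γ) with htcdef
  have htcpos : 0 < tc := by rw [htcdef]; positivity
  by_contra hcon
  push_neg at hcon
  obtain ⟨t₁, ht₁a, ht₁T⟩ := ereal_dense' hcon
  obtain ⟨t₂, ht₂a, ht₂T⟩ := ereal_dense' ht₁T
  obtain ⟨t₃, ht₃a, ht₃T⟩ := ereal_dense' ht₂T
  have h0t₁ : (0:ℝ) ≤ t₁ := le_of_lt (lt_trans htcpos ht₁a)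
  have ht₁₂le : t₁ ≤ t₂ := le_of_lt ht₂a
  have ht₂₃le : t₂ ≤ t₃ := le_of_lt ht₃a
  have h0t₃ : (0:ℝ) < t₃ := by linarith [lt_trans htcpos ht₁a]
  set SS : Set (ℝ × ℝ) := {p : ℝ × ℝ | 0 ≤ p.1 ∧ (p.1 : EReal) < T} with hSSdef
  set D : Set (ℝ × ℝ) := Set.Icc 0 t₃ ×ˢ (Set.univ : Set ℝ) with hDdef
  have hltT : ∀ t : ℝ, t ≤ t₃ → (t : EReal) < T := fun t ht =>
    lt_of_le_of_lt (EReal.coe_le_coe_iff.mpr ht) ht₃T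
  have hDS : D ⊆ SS := by
    rintro ⟨t, x⟩ ht
    exact ⟨ht.1.1, hltT t ht.1.2⟩
  have hmemD : ∀ {t : ℝ} (x : ℝ), t ∈ Set.Icc 0 t₃ → ((t, x) : ℝ × ℝ) ∈ D :=
    fun {t} x ht => Set.mem_prod.mpr ⟨ht, trivial⟩
  have hSnhds : ∀ t x : ℝ, 0 < t → t < t₃ → SS ∈ nhds ((t, x) : ℝ × ℝ) := by
    intro t x h1 h2
    refine Filter.mem_of_superset ((isOpen_Ioo.prod isOpen_univ).mem_nhds ⟨⟨h1, h2⟩, trivial⟩) ?_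
    rintro ⟨s, y⟩ ⟨hs, -⟩
    exact ⟨le_of_lt hs.1, hltT s (le_of_lt hs.2)⟩
  have hUD : UniqueDiffOn ℝ D := (uniqueDiffOn_Icc h0t₃).prod uniqueDiffOn_univ
  have rc : ContDiffOn ℝ 1 (fun p : ℝ × ℝ => r p.1 p.2) SS := hrl.fst
  have lc : ContDiffOn ℝ 1 (fun p : ℝ × ℝ => l p.1 p.2) SS := hrl.snd
  have hx₁tcont : ∀ a : ℝ, ContinuousOn (fun s => x₁ s a) (Set.Icc 0 t₃) := fun a s hs =>
    (hx₁ode a s hs.1 (hltT s hs.2)).continuousAt.continuousWithinAt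
  have hx₂tcont : ∀ b : ℝ, ContinuousOn (fun s => x₂ s b) (Set.Icc 0 t₃) := fun b s hs =>
    (hx₂ode b s hs.1 (hltT s hs.2)).continuousAt.continuousWithinAt
  have hrconst : ∀ (a : ℝ) {t : ℝ}, t ∈ Set.Icc 0 t₂ → r t (x₁ t a) = r₀ a := by
    intro a t ht
    have htlt : t < t₃ := lt_of_le_of_lt ht.2 ht₃a
    have key : r t (x₁ t a) = r 0 (x₁ 0 a) := by
      apply const_of_deriv_zero (f := fun s => r s (x₁ s a)) ht.1
      · exact rc.continuousOn.comp
          (continuousOn_id.prodMk ((hx₁tcont a).mono (Set.Icc_subset_Icc le_rfl (le_of_lt htlt))))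
          (fun s hs => ⟨hs.1, hltT s (le_trans hs.2 (le_of_lt htlt))⟩)
      · intro s hs
        have hslt : s < t₃ := lt_of_lt_of_le hs.2 (le_trans ht.2 ht₂₃le)
        have hsT : (s : EReal) < T := hltT s (le_of_lt hslt)
        obtain ⟨Dt, Dx, hDt, hDx, hchain⟩ := partials rc (hSnhds s (x₁ s a) hs.1 hslt)
        have hode : HasDerivAt (fun u => x₁ u a) (k (r s (x₁ s a) - l s (x₁ s a))) s :=
          hx₁ode a s (le_of_lt hs.1) hsT
        have hch : HasDerivAt (fun u => r u (x₁ u a))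
            (Dt + k (r s (x₁ s a) - l s (x₁ s a)) * Dx) s := hchain _ _ hode rfl
        have h1 := (hsys s (x₁ s a) (le_of_lt hs.1) hsT).1
        have e1 : deriv (fun u => r u (x₁ s a)) s = Dt := hDt.deriv
        have e2 : deriv (fun y => r s y) (x₁ s a) = Dx := hDx.deriv
        rw [e1, e2] at h1
        convert hch using 1
        linarith
    rw [key, hx₁0, hir]
  have hlconst : ∀ (b : ℝ) {t : ℝ}, t ∈ Set.Icc 0 t₂ → l t (x₂ t b) = -(r₀ b) := by
    intro b t ht
    have htlt : t < t₃ := lt_of_le_of_lt ht.2 ht₃a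
    have key : l t (x₂ t b) = l 0 (x₂ 0 b) := by
      apply const_of_deriv_zero (f := fun s => l s (x₂ s b)) ht.1
      · exact lc.continuousOn.comp
          (continuousOn_id.prodMk ((hx₂tcont b).mono (Set.Icc_subset_Icc le_rfl (le_of_lt htlt))))
          (fun s hs => ⟨hs.1, hltT s (le_trans hs.2 (le_of_lt htlt))⟩)
      · intro s hs
        have hslt : s < t₃ := lt_of_lt_of_le hs.2 (le_trans ht.2 ht₂₃le)
        have hsT : (s : EReal) < T := hltT s (le_of_lt hslt)
        obtain ⟨Dt, Dx, hDt, hDx, hchain⟩ := partials lc (hSnhds s (x₂ s b) hs.1 hslt)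
        have hode : HasDerivAt (fun u => x₂ u b) (-(k (r s (x₂ s b) - l s (x₂ s b)))) s :=
          hx₂ode b s (le_of_lt hs.1) hsT
        have hch : HasDerivAt (fun u => l u (x₂ u b))
            (Dt + (-(k (r s (x₂ s b) - l s (x₂ s b)))) * Dx) s := hchain _ _ hode rfl
        have h1 := (hsys s (x₂ s b) (le_of_lt hs.1) hsT).2
        have e1 : deriv (fun u => l u (x₂ s b)) s = Dt := hDt.deriv
        have e2 : deriv (fun y => l s y) (x₂ s b) = Dx := hDx.deriv
        rw [e1, e2] at h1
        convert hch using 1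
        linarith
    rw [key, hx₂0, hil]
  have hbge : ∀ {t : ℝ}, t ∈ Set.Icc 0 t₂ → α ≤ B t α := by
    intro t ht
    have htT : (t : EReal) < T := hltT t (le_trans ht.2 ht₂₃le)
    have hb := hBint t α ht.1 htT
    have hsub : Set.Icc 0 t ⊆ Set.Icc 0 t₃ := Set.Icc_subset_Icc le_rfl (le_trans ht.2 ht₂₃le)
    have hmono := mono_of_deriv (f := fun s => x₁ s α - x₂ s (B t α)) ht.1
      (((hx₁tcont α).mono hsub).sub ((hx₂tcont (B t α)).mono hsub))
      (fun s hs => by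
        have hsT : (s : EReal) < T := hltT s (le_trans (le_of_lt hs.2) (le_trans ht.2 ht₂₃le))
        refine ⟨_, (hx₁ode α s (le_of_lt hs.1) hsT).sub (hx₂ode (B t α) s (le_of_lt hs.1) hsT), ?_⟩
        have p1 := k_pos k hk (r s (x₁ s α) - l s (x₁ s α))
        have p2 := k_pos k hk (r s (x₂ s (B t α)) - l s (x₂ s (B t α)))
        linarith)
    simp only [hx₁0, hx₂0, hb, sub_self] at hmono
    linarith
  have hη0 : r 0 (x₁ 0 α) - l 0 (x₁ 0 α) = 2 * r₀ α := by
    rw [hx₁0, hir, hil]; ring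
  have hcurve : ContinuousOn (fun s : ℝ => ((s, x₁ s α) : ℝ × ℝ)) (Set.Icc 0 t₃) :=
    continuousOn_id.prodMk (hx₁tcont α)
  have hcmaps : Set.MapsTo (fun s : ℝ => ((s, x₁ s α) : ℝ × ℝ)) (Set.Icc 0 t₃) SS :=
    fun s hs => ⟨hs.1, hltT s hs.2⟩
  have hηcont : ContinuousOn (fun t => r t (x₁ t α) - l t (x₁ t α)) (Set.Icc 0 t₃) :=
    (rc.continuousOn.comp hcurve hcmaps).sub (lc.continuousOn.comp hcurve hcmaps)
  have hηeq : ∀ {t : ℝ}, t ∈ Set.Icc 0 t₂ →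
      r t (x₁ t α) - l t (x₁ t α) = r₀ α + r₀ (B t α) := by
    intro t ht
    have hb := hBint t α ht.1 (hltT t (le_trans ht.2 ht₂₃le))
    rw [hrconst α ht, hb, hlconst (B t α) ht]
    ring
  have hηlb : ∀ {t : ℝ}, t ∈ Set.Icc 0 t₂ → ε < |r t (x₁ t α) - l t (x₁ t α)| := by
    intro t ht; rw [hηeq ht]; exact hsep _ (hbge ht)
  have hηub : ∀ {t : ℝ}, t ∈ Set.Icc 0 t₂ → |r t (x₁ t α) - l t (x₁ t α)| ≤ M := by
    intro t ht; rw [hηeq ht]; exact hM1 _ (hbge ht)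
  have hηsgn : ∀ {t : ℝ}, t ∈ Set.Icc 0 t₂ →
      0 < (r t (x₁ t α) - l t (x₁ t α)) * r₀ α := by
    intro t ht
    set e : ℝ → ℝ := fun u => r u (x₁ u α) - l u (x₁ u α) with hedef
    have hsubc : ContinuousOn e (Set.Icc 0 t) :=
      hηcont.mono (Set.Icc_subset_Icc le_rfl (le_trans ht.2 ht₂₃le))
    have hzero : ∀ s ∈ Set.Icc 0 t, e s ≠ 0 := by
      intro s hs h0
      have := hηlb (Set.mem_of_mem_of_subset hs
        (Set.Icc_subset_Icc le_rfl ht.2))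
      rw [show r s (x₁ s α) - l s (x₁ s α) = e s from rfl, h0] at this
      simp at this; linarith
    rcases lt_or_gt_of_ne hr0ne with hneg | hpos
    · rcases lt_trichotomy (e t) 0 with h | h | h
      · exact mul_pos_of_neg_of_neg h hneg
      · exact absurd h (hzero t ⟨ht.1, le_rfl⟩)
      · exfalso
        have hiv := intermediate_value_Icc ht.1 hsubc
        have h0mem : (0:ℝ) ∈ Set.Icc (e 0) (e t) :=
          ⟨by rw [show e 0 = 2 * r₀ α from hη0]; linarith, le_of_lt h⟩
        obtain ⟨s, hs, hs0⟩ := hiv h0mem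
        exact hzero s hs hs0
    · rcases lt_trichotomy (e t) 0 with h | h | h
      · exfalso
        have hiv := intermediate_value_Icc' ht.1 hsubc
        have h0mem : (0:ℝ) ∈ Set.Icc (e t) (e 0) :=
          ⟨le_of_lt h, by rw [show e 0 = 2 * r₀ α from hη0]; linarith⟩
        obtain ⟨s, hs, hs0⟩ := hiv h0mem
        exact hzero s hs hs0
      · exact absurd h (hzero t ⟨ht.1, le_rfl⟩)
      · exact mul_pos h hpos
  -- fderivWithin machinery
  have hx₁D : ContDiffOn ℝ 1 (fun p : ℝ × ℝ => x₁ p.1 p.2) D := hx₁C.mono hDS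
  have hlD : ContDiffOn ℝ 1 (fun p : ℝ × ℝ => l p.1 p.2) D := lc.mono hDS
  set Yf : ℝ × ℝ → ℝ :=
    fun p => fderivWithin ℝ (fun p : ℝ × ℝ => x₁ p.1 p.2) D p ((0:ℝ), (1:ℝ)) with hYfdef
  set Pf : ℝ × ℝ → ℝ :=
    fun p => fderivWithin ℝ (fun p : ℝ × ℝ => l p.1 p.2) D p ((0:ℝ), (1:ℝ)) with hPfdef
  have hYcont : ContinuousOn Yf D :=
    (hx₁D.continuousOn_fderivWithin hUD le_rfl).clm_apply continuousOn_const
  have hPcont : ContinuousOn Pf D :=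
    (hlD.continuousOn_fderivWithin hUD le_rfl).clm_apply continuousOn_const
  have hYd : ∀ t a : ℝ, t ∈ Set.Icc 0 t₃ → HasDerivAt (fun a' => x₁ t a') (Yf (t, a)) a := by
    intro t a ht
    have hw := (hx₁D.differentiableOn one_ne_zero (t, a) (hmemD a ht)).hasFDerivWithinAt
    have hι : HasDerivAt (fun a' : ℝ => ((t, a') : ℝ × ℝ)) (((0:ℝ), (1:ℝ)) : ℝ × ℝ) a :=
      (hasDerivAt_const a t).prodMk (hasDerivAt_id a)
    have hmaps : Set.MapsTo (fun a' : ℝ => ((t, a') : ℝ × ℝ)) Set.univ D :=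
      fun a' _ => hmemD a' ht
    have hcomp := hw.comp a (hι.hasFDerivAt.hasFDerivWithinAt) hmaps
    rw [hasFDerivWithinAt_univ] at hcomp
    simpa [Function.comp_def] using hcomp.hasDerivAt
  have hPd : ∀ t x : ℝ, t ∈ Set.Icc 0 t₃ → HasDerivAt (fun y => l t y) (Pf (t, x)) x := by
    intro t x ht
    have hw := (hlD.differentiableOn one_ne_zero (t, x) (hmemD x ht)).hasFDerivWithinAt
    have hι : HasDerivAt (fun y : ℝ => ((t, y) : ℝ × ℝ)) (((0:ℝ), (1:ℝ)) : ℝ × ℝ) x :=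
      (hasDerivAt_const x t).prodMk (hasDerivAt_id x)
    have hmaps : Set.MapsTo (fun y : ℝ => ((t, y) : ℝ × ℝ)) Set.univ D :=
      fun y _ => hmemD y ht
    have hcomp := hw.comp x (hι.hasFDerivAt.hasFDerivWithinAt) hmaps
    rw [hasFDerivWithinAt_univ] at hcomp
    simpa [Function.comp_def] using hcomp.hasDerivAt
  -- the characteristic speed along forward characteristics, and its a-derivative
  set G : ℝ × ℝ → ℝ := fun p => k (r p.1 (x₁ p.1 p.2) - l p.1 (x₁ p.1 p.2)) with hGdef
  have hψD : ContDiffOn ℝ 1 (fun p : ℝ × ℝ => ((p.1, x₁ p.1 p.2) : ℝ × ℝ)) D :=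
    (contDiff_fst.contDiffOn).prodMk hx₁D
  have hψmaps : Set.MapsTo (fun p : ℝ × ℝ => ((p.1, x₁ p.1 p.2) : ℝ × ℝ)) D D :=
    fun p hp => hmemD _ hp.1
  have hGD : ContDiffOn ℝ 1 G D :=
    hk1.comp_contDiffOn
      (((rc.mono hDS).comp hψD hψmaps).sub ((lc.mono hDS).comp hψD hψmaps))
  set q : ℝ × ℝ → ℝ := fun p =>
    deriv k (r p.1 (x₁ p.1 p.2) - l p.1 (x₁ p.1 p.2)) *
      (deriv r₀ p.2 - Pf (p.1, x₁ p.1 p.2) * Yf p) with hqdef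
  have hqd : ∀ (a t : ℝ), t ∈ Set.Icc 0 t₂ →
      HasDerivAt (fun a' => G (t, a')) (q (t, a)) a := by
    intro a t ht
    have ht3 : t ∈ Set.Icc 0 t₃ := ⟨ht.1, le_trans ht.2 ht₂₃le⟩
    have hinner : HasDerivAt (fun a' => r₀ a' - l t (x₁ t a'))
        (deriv r₀ a - Pf (t, x₁ t a) * Yf (t, a)) a := by
      have h1 : HasDerivAt r₀ (deriv r₀ a) a := (hr₀.differentiable one_ne_zero a).hasDerivAt
      have h2 : HasDerivAt (fun a' => l t (x₁ t a')) (Pf (t, x₁ t a) * Yf (t, a)) a :=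
        (hPd t (x₁ t a) ht3).comp a (hYd t a ht3)
      exact h1.sub h2
    have hkd : HasDerivAt k (deriv k (r₀ a - l t (x₁ t a))) (r₀ a - l t (x₁ t a)) :=
      (hk1.differentiable one_ne_zero _).hasDerivAt
    have hcomp : HasDerivAt (fun a' => k (r₀ a' - l t (x₁ t a')))
        (deriv k (r₀ a - l t (x₁ t a)) * (deriv r₀ a - Pf (t, x₁ t a) * Yf (t, a))) a :=
      hkd.comp a hinner
    have hfun : (fun a' => G (t, a')) = fun a' => k (r₀ a' - l t (x₁ t a')) := by
      funext a'
      show k (r t (x₁ t a') - l t (x₁ t a')) = _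
      rw [hrconst a' ht]
    rw [hfun]
    have hqval : q (t, a) =
        deriv k (r₀ a - l t (x₁ t a)) * (deriv r₀ a - Pf (t, x₁ t a) * Yf (t, a)) := by
      show deriv k (r t (x₁ t a) - l t (x₁ t a)) * _ = _
      rw [hrconst a ht]
    rw [hqval]
    exact hcomp
  have hqcont : ContinuousOn q D := by
    have hψcont : ContinuousOn (fun p : ℝ × ℝ => ((p.1, x₁ p.1 p.2) : ℝ × ℝ)) D :=
      hψD.continuousOn
    have h1 : ContinuousOn (fun p : ℝ × ℝ => r p.1 (x₁ p.1 p.2) - l p.1 (x₁ p.1 p.2)) D :=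
      ((rc.mono hDS).continuousOn.comp hψcont hψmaps).sub
        ((lc.mono hDS).continuousOn.comp hψcont hψmaps)
    have h2 : ContinuousOn
        (fun p : ℝ × ℝ => deriv k (r p.1 (x₁ p.1 p.2) - l p.1 (x₁ p.1 p.2))) D :=
      (hk1.continuous_deriv le_rfl).comp_continuousOn h1
    have h3 : ContinuousOn (fun p : ℝ × ℝ => deriv r₀ p.2) D :=
      ((hr₀.continuous_deriv le_rfl).comp continuous_snd).continuousOn
    have h4 : ContinuousOn (fun p : ℝ × ℝ => Pf (p.1, x₁ p.1 p.2)) D :=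
      hPcont.comp hψcont hψmaps
    exact h2.mul (h3.sub (h4.mul hYcont))
  have hrepr : ∀ (a t : ℝ), t ∈ Set.Icc 0 t₃ →
      x₁ t a = a + ∫ s in (0:ℝ)..t, G (s, a) := by
    intro a t ht
    have hcont : ContinuousOn (fun s => G (s, a)) (Set.Icc 0 t) :=
      hGD.continuousOn.comp (continuousOn_id.prodMk continuousOn_const)
        (fun s hs => hmemD a ⟨hs.1, le_trans hs.2 ht.2⟩)
    have hderiv : ∀ s ∈ Set.uIcc 0 t, HasDerivAt (fun u => x₁ u a) (G (s, a)) s := by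
      intro s hs
      rw [Set.uIcc_of_le ht.1] at hs
      exact hx₁ode a s hs.1 (hltT s (le_trans hs.2 ht.2))
    have hint : IntervalIntegrable (fun s => G (s, a)) MeasureTheory.volume 0 t := by
      apply ContinuousOn.intervalIntegrable
      rwa [Set.uIcc_of_le ht.1]
    have hFTC := intervalIntegral.integral_eq_sub_of_hasDerivAt hderiv hint
    rw [hFTC, hx₁0]
    ring
  -- yy = Jacobian of the forward characteristic flow along a = α
  set yy : ℝ → ℝ := fun t => 1 + ∫ s in (0:ℝ)..t, q (s, α) with hyydef
  have hyy0 : yy 0 = 1 := by simp [hyydef]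
  have hq1cont : ContinuousOn (fun s => q (s, α)) (Set.Icc 0 t₃) :=
    hqcont.comp (continuousOn_id.prodMk continuousOn_const) (fun s hs => hmemD α hs)
  have hYeq : ∀ t ∈ Set.Icc 0 t₂, Yf (t, α) = yy t := by
    intro t ht
    have ht3 : t ∈ Set.Icc 0 t₃ := ⟨ht.1, le_trans ht.2 ht₂₃le⟩
    obtain ⟨Cq, hCq⟩ : ∃ Cb, ∀ p ∈ (Set.Icc 0 t₃ ×ˢ Set.Icc (α - 1) (α + 1) : Set (ℝ × ℝ)),
        ‖q p‖ ≤ Cb :=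
      (isCompact_Icc.prod isCompact_Icc).exists_bound_of_continuousOn
        (hqcont.mono (Set.prod_mono le_rfl (Set.subset_univ _)))
    have hball : ∀ a' ∈ Metric.ball α 1, ∀ s ∈ Set.Ioc 0 t, ((s, a') : ℝ × ℝ) ∈
        (Set.Icc 0 t₃ ×ˢ Set.Icc (α - 1) (α + 1) : Set (ℝ × ℝ)) := by
      intro a' ha' s hs
      rw [Metric.mem_ball, Real.dist_eq, abs_lt] at ha'
      exact ⟨⟨le_of_lt hs.1, le_trans hs.2 ht3.2⟩, ⟨by linarith [ha'.1], by linarith [ha'.2]⟩⟩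
    have hder : HasDerivAt (fun a' => ∫ s in (0:ℝ)..t, G (s, a'))
        (∫ s in (0:ℝ)..t, q (s, α)) α := by
      have hui : Set.uIoc (0:ℝ) t = Set.Ioc 0 t := Set.uIoc_of_le ht.1
      have key := intervalIntegral.hasDerivAt_integral_of_dominated_loc_of_deriv_le
        (F := fun a' s => G (s, a')) (F' := fun a' s => q (s, a')) (x₀ := α)
        (a := 0) (b := t) (bound := fun _ => Cq) (μ := MeasureTheory.volume) (s := Metric.ball α 1) (Metric.ball_mem_nhds α one_pos)
        ?_ ?_ ?_ ?_ ?_ ?_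
      · exact key.2
      · -- measurability of G (·, a') for a' near α
        refine Filter.Eventually.of_forall (fun a' => ?_)
        apply ContinuousOn.aestronglyMeasurable _ measurableSet_uIoc
        have hcc : ContinuousOn (fun s => G (s, a')) (Set.Icc 0 t) :=
          hGD.continuousOn.comp (continuousOn_id.prodMk continuousOn_const)
            (fun s hs => hmemD a' ⟨hs.1, le_trans hs.2 ht3.2⟩)
        rw [hui]
        exact hcc.mono Set.Ioc_subset_Icc_self
      · apply ContinuousOn.intervalIntegrable
        rw [Set.uIcc_of_le ht.1]
        exact hGD.continuousOn.comp (continuousOn_id.prodMk continuousOn_const)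
          (fun s hs => hmemD α ⟨hs.1, le_trans hs.2 ht3.2⟩)
      · apply ContinuousOn.aestronglyMeasurable _ measurableSet_uIoc
        rw [hui]
        exact hq1cont.mono (fun s hs => ⟨le_of_lt hs.1, le_trans hs.2 ht3.2⟩)
      · refine Filter.Eventually.of_forall (fun s => ?_)
        intro hs a' ha'
        rw [hui] at hs
        exact hCq _ (hball a' ha' s hs)
      · exact intervalIntegrable_const
      · refine Filter.Eventually.of_forall (fun s => ?_)
        intro hs a' ha'
        rw [hui] at hs
        exact hqd a' s ⟨le_of_lt hs.1, le_trans hs.2 ht.2⟩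
    have hF2 := hYd t α ht3
    have hfun : (fun a' => x₁ t a') = fun a' => a' + ∫ s in (0:ℝ)..t, G (s, a') :=
      funext fun a' => hrepr a' t ht3
    rw [hfun] at hF2
    exact hF2.unique ((hasDerivAt_id α).add hder)
  have hyyd : ∀ t ∈ Set.Ioo 0 t₁, HasDerivAt yy (q (t, α)) t := by
    intro t ht
    have ht3 : t < t₃ := lt_trans (lt_trans ht.2 ht₂a) ht₃a
    have hint : IntervalIntegrable (fun s => q (s, α)) MeasureTheory.volume 0 t := by
      apply ContinuousOn.intervalIntegrable
      rw [Set.uIcc_of_le (le_of_lt ht.1)]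
      exact hq1cont.mono (Set.Icc_subset_Icc le_rfl (le_of_lt ht3))
    have hms : StronglyMeasurableAtFilter (fun s => q (s, α)) (nhds t) :=
      ContinuousOn.stronglyMeasurableAtFilter isOpen_Ioo
        (hq1cont.mono Set.Ioo_subset_Icc_self) t ⟨ht.1, ht3⟩
    have hcat : ContinuousAt (fun s => q (s, α)) t :=
      (hq1cont.mono Set.Ioo_subset_Icc_self).continuousAt
        (isOpen_Ioo.mem_nhds (⟨ht.1, ht3⟩ : t ∈ Set.Ioo (0:ℝ) t₃))
    have hFTC := intervalIntegral.integral_hasDerivAt_right hint hms hcat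
    exact hFTC.const_add 1
  have hyycont : ContinuousOn yy (Set.Icc 0 t₂) := by
    have h1 : ContinuousOn (fun t => Yf (t, α)) (Set.Icc 0 t₂) :=
      hYcont.comp (continuousOn_id.prodMk continuousOn_const)
        (fun s hs => hmemD α ⟨hs.1, le_trans hs.2 ht₂₃le⟩)
    exact h1.congr (fun t ht => (hYeq t ht).symm)
  have hyne : ∀ t ∈ Set.Icc 0 t₂, yy t ≠ 0 := by
    intro t ht
    rcases eq_or_lt_of_le ht.1 with h0 | h0
    · rw [← h0, hyy0]; norm_num
    · have ht3 : t ∈ Set.Icc 0 t₃ := ⟨ht.1, le_trans ht.2 ht₂₃le⟩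
      have htlt : t < t₃ := lt_of_le_of_lt ht.2 ht₃a
      obtain ⟨Dt, Dx, hDt, hDx, -⟩ := partials rc (hSnhds t (x₁ t α) h0 htlt)
      have hcomp : HasDerivAt (fun a => r t (x₁ t a)) (Dx * Yf (t, α)) α :=
        hDx.comp α (hYd t α ht3)
      have hfun : (fun a => r t (x₁ t a)) = r₀ := funext fun a => hrconst a ht
      rw [hfun] at hcomp
      have huniq : Dx * Yf (t, α) = deriv r₀ α :=
        hcomp.unique (hr₀.differentiable one_ne_zero α).hasDerivAt
      intro hzero
      rw [hYeq t ht, hzero, mul_zero] at huniq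
      exact hd0 huniq.symm
  have hyypos : ∀ t ∈ Set.Icc 0 t₁, 0 < yy t := by
    intro t ht
    rcases lt_trichotomy 0 (yy t) with h | h | h
    · exact h
    · exact absurd h.symm (hyne t ⟨ht.1, le_trans ht.2 ht₁₂le⟩)
    · exfalso
      have hsubc : ContinuousOn yy (Set.Icc 0 t) :=
        hyycont.mono (Set.Icc_subset_Icc le_rfl (le_trans ht.2 ht₁₂le))
      have hiv := intermediate_value_Icc' ht.1 hsubc
      have h0mem : (0:ℝ) ∈ Set.Icc (yy t) (yy 0) := ⟨le_of_lt h, by rw [hyy0]; norm_num⟩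
      obtain ⟨s, hs, hs0⟩ := hiv h0mem
      exact hyne s ⟨hs.1, le_trans hs.2 (le_trans ht.2 ht₁₂le)⟩ hs0
  -- derivative of η along the forward characteristic from α
  have hηd : ∀ t ∈ Set.Ioo 0 t₁,
      HasDerivAt (fun u => r u (x₁ u α) - l u (x₁ u α))
        (-(2 * k (r t (x₁ t α) - l t (x₁ t α)) * Pf (t, x₁ t α))) t := by
    intro t ht
    have htlt : t < t₃ := lt_trans (lt_trans ht.2 ht₂a) ht₃a
    have ht3 : t ∈ Set.Icc 0 t₃ := ⟨le_of_lt ht.1, le_of_lt htlt⟩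
    have hTT : (t : EReal) < T := hltT t (le_of_lt htlt)
    obtain ⟨Dtr, Dxr, hDtr, hDxr, hchr⟩ := partials rc (hSnhds t (x₁ t α) ht.1 htlt)
    obtain ⟨Dtl, Dxl, hDtl, hDxl, hchl⟩ := partials lc (hSnhds t (x₁ t α) ht.1 htlt)
    have hode : HasDerivAt (fun u => x₁ u α) (k (r t (x₁ t α) - l t (x₁ t α))) t :=
      hx₁ode α t (le_of_lt ht.1) hTT
    have hchR : HasDerivAt (fun u => r u (x₁ u α))
        (Dtr + k (r t (x₁ t α) - l t (x₁ t α)) * Dxr) t := hchr _ _ hode rfl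
    have hchL : HasDerivAt (fun u => l u (x₁ u α))
        (Dtl + k (r t (x₁ t α) - l t (x₁ t α)) * Dxl) t := hchl _ _ hode rfl
    have hs1 := (hsys t (x₁ t α) (le_of_lt ht.1) hTT).1
    have hs2 := (hsys t (x₁ t α) (le_of_lt ht.1) hTT).2
    have e1 : deriv (fun u => r u (x₁ t α)) t = Dtr := hDtr.deriv
    have e2 : deriv (fun y => r t y) (x₁ t α) = Dxr := hDxr.deriv
    have e3 : deriv (fun u => l u (x₁ t α)) t = Dtl := hDtl.deriv
    have e4 : deriv (fun y => l t y) (x₁ t α) = Dxl := hDxl.deriv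
    rw [e1, e2] at hs1
    rw [e3, e4] at hs2
    have hPX : Dxl = Pf (t, x₁ t α) := hDxl.unique (hPd t (x₁ t α) ht3)
    have hder := hchR.sub hchL
    refine hder.congr_deriv ?_
    rw [← hPX]
    linarith
  -- derivative of v = yy / sqrt (k ∘ η)
  have hvd : ∀ t ∈ Set.Ioo 0 t₁,
      HasDerivAt (fun u => yy u / Real.sqrt (k (r u (x₁ u α) - l u (x₁ u α))))
        (deriv r₀ α * fk k (r t (x₁ t α) - l t (x₁ t α))) t := by
    intro t ht
    have ht2 : t ∈ Set.Icc 0 t₂ := ⟨le_of_lt ht.1, le_trans (le_of_lt ht.2) ht₁₂le⟩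
    have hkd : HasDerivAt k (deriv k (r t (x₁ t α) - l t (x₁ t α)))
        (r t (x₁ t α) - l t (x₁ t α)) := (hk1.differentiable one_ne_zero _).hasDerivAt
    have hkη : HasDerivAt (fun u => k (r u (x₁ u α) - l u (x₁ u α)))
        (deriv k (r t (x₁ t α) - l t (x₁ t α)) *
          (-(2 * k (r t (x₁ t α) - l t (x₁ t α)) * Pf (t, x₁ t α)))) t :=
      hkd.comp t (hηd t ht)
    have hkpos : (0:ℝ) < k (r t (x₁ t α) - l t (x₁ t α)) := k_pos k hk _
    have hw := hkη.sqrt (ne_of_gt hkpos)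
    have hwpos : (0:ℝ) < Real.sqrt (k (r t (x₁ t α) - l t (x₁ t α))) :=
      Real.sqrt_pos.mpr hkpos
    have hdiv := (hyyd t ht).div hw (ne_of_gt hwpos)
    refine hdiv.congr_deriv ?_
    have hqval : q (t, α) = deriv k (r t (x₁ t α) - l t (x₁ t α)) *
        (deriv r₀ α - Pf (t, x₁ t α) * yy t) := by
      show deriv k (r t (x₁ t α) - l t (x₁ t α)) *
        (deriv r₀ α - Pf (t, x₁ t α) * Yf (t, α)) = _
      rw [hYeq t ht2]
    rw [hqval]
    unfold fk
    set sq := Real.sqrt (k (r t (x₁ t α) - l t (x₁ t α))) with hsqdef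
    have hsq : sq ^ 2 = k (r t (x₁ t α) - l t (x₁ t α)) := Real.sq_sqrt (le_of_lt hkpos)
    rw [← hsq]
    have hsqne : sq ≠ 0 := ne_of_gt hwpos
    field_simp
    ring
  -- the key sign estimate
  have hfkb : ∀ t ∈ Set.Ioo 0 t₁,
      deriv r₀ α * fk k (r t (x₁ t α) - l t (x₁ t α)) ≤ -(|deriv r₀ α| * γ) := by
    intro t ht
    have ht2 : t ∈ Set.Icc 0 t₂ := ⟨le_of_lt ht.1, le_trans (le_of_lt ht.2) ht₁₂le⟩
    set E := r t (x₁ t α) - l t (x₁ t α) with hEdef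
    have hlb : ε < |E| := hηlb ht2
    have hub : |E| ≤ M := hηub ht2
    have hsgn : 0 < E * r₀ α := hηsgn ht2
    have hwpos : (0:ℝ) < Real.sqrt (k E) := sqrt_k_pos k hk E
    rcases lt_or_gt_of_ne hr0ne with hneg | hpos
    · -- r₀ α < 0, E < 0, deriv r₀ α > 0
      have hEneg : E < 0 := by
        rcases mul_pos_iff.mp hsgn with ⟨h1, h2⟩ | ⟨h1, h2⟩
        · linarith
        · exact h1
      have hd : 0 < deriv r₀ α := by
        rcases mul_neg_iff.mp hαsign with ⟨h1, h2⟩ | ⟨h1, h2⟩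
        · exact h1
        · linarith
      have habs : |E| = -E := abs_of_neg hEneg
      have hγfk : γ ≤ |fk k E| := by
        rw [← fk_abs_even k hk hk1]
        exact hγle (-E) (by rw [habs] at hlb; linarith) (by rw [habs] at hub; linarith)
      have hfkneg : fk k E < 0 := by
        unfold fk
        exact div_neg_of_neg_of_pos (k_deriv_neg k hk hk1 hEneg) hwpos
      have hfkle : fk k E ≤ -γ := by
        rw [abs_of_neg hfkneg] at hγfk; linarith
      rw [abs_of_pos hd]
      linarith [mul_le_mul_of_nonneg_left hfkle (le_of_lt hd)]
    · -- r₀ α > 0, E > 0, deriv r₀ α < 0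
      have hEpos : 0 < E := by
        rcases mul_pos_iff.mp hsgn with ⟨h1, h2⟩ | ⟨h1, h2⟩
        · exact h1
        · linarith
      have hd : deriv r₀ α < 0 := by
        rcases mul_neg_iff.mp hαsign with ⟨h1, h2⟩ | ⟨h1, h2⟩
        · linarith
        · exact h1
      have habs : |E| = E := abs_of_pos hEpos
      have hγfk : γ ≤ |fk k E| :=
        hγle E (by rw [habs] at hlb; linarith) (by rw [habs] at hub; linarith)
      have hfkpos' : 0 < fk k E := by
        unfold fk
        exact div_pos (k_deriv_pos k hk hk1 hEpos) hwpos
      have hfkge : γ ≤ fk k E := by rw [abs_of_pos hfkpos'] at hγfk; linarith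
      rw [abs_of_neg hd]
      linarith [mul_le_mul_of_nonpos_left hfkge (le_of_lt hd)]
  -- conclusion
  have hvcont : ContinuousOn
      (fun u => yy u / Real.sqrt (k (r u (x₁ u α) - l u (x₁ u α)))) (Set.Icc 0 t₁) := by
    have h1 := hyycont.mono (Set.Icc_subset_Icc le_rfl ht₁₂le)
    have h2 : ContinuousOn (fun u => Real.sqrt (k (r u (x₁ u α) - l u (x₁ u α))))
        (Set.Icc 0 t₁) :=
      Real.continuous_sqrt.comp_continuousOn (hk1.continuous.comp_continuousOn
        (hηcont.mono (Set.Icc_subset_Icc le_rfl (le_trans ht₁₂le ht₂₃le))))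
    exact h1.div h2 (fun u _ => ne_of_gt (sqrt_k_pos k hk _))
  have hlin := le_linear_of_deriv_le h0t₁ hvcont
    (fun t ht => ⟨_, hvd t ht, hfkb t ht⟩)
  have hv0 : yy 0 / Real.sqrt (k (r 0 (x₁ 0 α) - l 0 (x₁ 0 α))) = 1 / kα := by
    rw [hyy0, hη0, hkαdef]
  rw [hv0] at hlin
  have hvt₁pos : 0 < yy t₁ / Real.sqrt (k (r t₁ (x₁ t₁ α) - l t₁ (x₁ t₁ α))) :=
    div_pos (hyypos t₁ ⟨h0t₁, le_rfl⟩) (sqrt_k_pos k hk _)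
  have htceq : |deriv r₀ α| * γ * tc = 1 / kα := by
    rw [htcdef]
    field_simp
  have hstep : |deriv r₀ α| * γ * tc < |deriv r₀ α| * γ * t₁ :=
    mul_lt_mul_of_pos_left ht₁a (mul_pos hR' hγpos)
  linarith [hlin, hvt₁pos, htceq, hstep]
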